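/- With g and X̃ as above, for any 0 ≤ s ≤ s + t ≤ g(x̄): E[Ỹ² · 1{s < X̃ < s + t}] = t. That is, the conditional-variance-weighted measure of any interval under the time change equals its length. -/
import Mathlib


open MeasureTheory

/-- With the time change `g(u) = ∫_{x̲}^u σ_Y²(x) f_X(x) dx` and `X̃ = g(X)`: for any
`0 ≤ s ≤ s + t ≤ g(x̄)`, the conditional-variance-weighted measure of the interval equals its
length: `E[Ỹ² · 1{s < X̃ < s + t}] = t`. -/
theorem stmt1 {Ω : Type*} [MeasurableSpace Ω] (μ : Measure Ω) [IsProbabilityMeasure μ]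
    (X Yt : Ω → ℝ) (hX : Measurable X) (hYt : Measurable Yt)
    (fX σY2 : ℝ → ℝ) (hfX : Measurable fX) (hσY2 : Measurable σY2)
    (xl xu : ℝ) (hxlu : xl < xu)
    (hdens : ∀ s : Set ℝ, MeasurableSet s → (μ (X ⁻¹' s)).toReal = ∫ x in s, fX x)
    (cl cu : ℝ) (hcl : 0 < cl) (hbound : ∀ x, cl ≤ σY2 x ∧ σY2 x ≤ cu)
    (hcond : ∀ s : Set ℝ, MeasurableSet s →
      ∫ ω, (Yt ω) ^ 2 * Set.indicator s (fun _ => (1 : ℝ)) (X ω) ∂μ =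
        ∫ x in s, σY2 x * fX x) :
    ∀ s t : ℝ, 0 ≤ s → 0 ≤ t → s + t ≤ ∫ x in xl..xu, σY2 x * fX x →
      ∫ ω, (Yt ω) ^ 2 *
          Set.indicator (Set.Ioo s (s + t)) (fun _ => (1 : ℝ))
            (∫ x in xl..(X ω), σY2 x * fX x) ∂μ = t := by
  intro s t hs ht hst
  -- trivial case t = 0
  rcases eq_or_lt_of_le ht with ht0 | ht0
  · simp [← ht0]
  -- notation
  set F : ℝ → ℝ := fun x => σY2 x * fX x with hFdef
  have hFm : Measurable F := hσY2.mul hfX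
  -- fX is a.e. nonnegative
  have hfX0 : ∀ᵐ x ∂(volume : Measure ℝ), 0 ≤ fX x := by
    have key : ∀ n : ℕ, volume (Set.Icc (-(n:ℝ)-1) (n+1) ∩
        fX ⁻¹' Set.Icc (-(n:ℝ)-1) (-(1/(n+1)))) = 0 := by
      intro n
      set sn : Set ℝ := Set.Icc (-(n:ℝ)-1) (n+1) ∩
        fX ⁻¹' Set.Icc (-(n:ℝ)-1) (-(1/(n+1))) with hsn
      have hmeas : MeasurableSet sn := measurableSet_Icc.inter (hfX measurableSet_Icc)
      have hfin : volume sn < ⊤ :=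
        lt_of_le_of_lt (measure_mono Set.inter_subset_left) measure_Icc_lt_top
      haveI : Fact (volume sn < ⊤) := ⟨hfin⟩
      have hintfX : IntegrableOn fX sn := by
        refine Integrable.mono' (integrable_const ((n:ℝ)+1)) (hfX.aestronglyMeasurable) ?_
        refine (ae_restrict_iff' hmeas).2 (Filter.Eventually.of_forall fun x hx => ?_)
        have h1 := hx.2.1
        have h2 := hx.2.2
        have hpos : (0:ℝ) < 1/(n+1) := by positivity
        rw [Real.norm_eq_abs, abs_le]
        constructor <;> nlinarith
      have h0 : 0 ≤ ∫ x in sn, fX x := by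
        rw [← hdens sn hmeas]; exact ENNReal.toReal_nonneg
      have hle : ∫ x in sn, fX x ≤ ∫ _ in sn, (-(1/((n:ℝ)+1))) :=
        setIntegral_mono_on hintfX (integrable_const _) hmeas (fun x hx => hx.2.2)
      rw [setIntegral_const, smul_eq_mul] at hle
      have hv0 : (volume sn).toReal = 0 := by
        have hpos : (0:ℝ) < 1/(n+1) := by positivity
        have hnn : (0:ℝ) ≤ (volume sn).toReal := ENNReal.toReal_nonneg
        have hkey : (0:ℝ) ≤ (volume sn).toReal * (-(1/(n+1))) := le_trans h0 hle
        nlinarith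
      exact (ENNReal.toReal_eq_zero_iff _).1 hv0 |>.resolve_right hfin.ne
    have hsub : {x : ℝ | ¬ 0 ≤ fX x} ⊆
        ⋃ n : ℕ, (Set.Icc (-(n:ℝ)-1) (n+1) ∩ fX ⁻¹' Set.Icc (-(n:ℝ)-1) (-(1/(n+1)))) := by
      intro x hx
      have hx' : fX x < 0 := lt_of_not_ge hx
      obtain ⟨n, hn⟩ := exists_nat_ge (max |x| (max (-fX x) (1 / (-fX x))))
      have h1 : |x| ≤ n := le_trans (le_max_left _ _) hn
      have h2 : -fX x ≤ n := le_trans (le_trans (le_max_left _ _) (le_max_right _ _)) hn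
      have h3 : 1 / (-fX x) ≤ n := le_trans (le_trans (le_max_right _ _) (le_max_right _ _)) hn
      rw [abs_le] at h1
      have hpos : (0:ℝ) < -fX x := by linarith
      have hrec : 1 / ((n:ℝ)+1) ≤ -fX x := by
        rw [div_le_iff₀ (by positivity)]
        rw [div_le_iff₀ hpos] at h3
        nlinarith
      refine Set.mem_iUnion.2 ⟨n, ⟨Set.mem_Icc.2 ⟨by linarith [h1.1], by linarith [h1.2]⟩,
        Set.mem_preimage.2 (Set.mem_Icc.2 ⟨by linarith, by linarith⟩)⟩⟩
    exact measure_mono_null hsub (measure_iUnion_null key)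
  have hF0 : ∀ᵐ x ∂(volume : Measure ℝ), 0 ≤ F x := by
    filter_upwards [hfX0] with x hx
    exact mul_nonneg (le_of_lt (lt_of_lt_of_le hcl (hbound x).1)) hx
  -- nonnegativity of all set integrals of F
  have hsetnn : ∀ u : Set ℝ, 0 ≤ ∫ x in u, F x :=
    fun u => integral_nonneg_of_ae (ae_restrict_of_ae hF0)
  -- main case split on integrability
  by_cases hInt : IntegrableOn F (Set.Ioc xl xu)
  swap
  · exfalso
    rw [intervalIntegral.integral_of_le hxlu.le] at hst
    rw [integral_undef hInt] at hst
    linarith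
  set g : ℝ → ℝ := fun u => ∫ x in xl..u, F x with hgdef
  have hIntIcc : IntegrableOn F (Set.Icc xl xu) :=
    (integrableOn_Icc_iff_integrableOn_Ioc).2 hInt
  have huIcc : Set.uIcc xl xu = Set.Icc xl xu := Set.uIcc_of_le hxlu.le
  have hsubII : ∀ u v : ℝ, u ∈ Set.Icc xl xu → v ∈ Set.Icc xl xu →
      IntervalIntegrable F volume u v := by
    intro u v hu hv
    refine (hIntIcc.mono_set ?_).intervalIntegrable
    rw [← huIcc]
    exact Set.uIcc_subset_uIcc (huIcc ▸ hu) (huIcc ▸ hv)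
  have hgadd : ∀ u v : ℝ, u ∈ Set.Icc xl xu → v ∈ Set.Icc xl xu →
      g u + ∫ x in u..v, F x = g v := by
    intro u v hu hv
    exact intervalIntegral.integral_add_adjacent_intervals
      (hsubII xl u (Set.left_mem_Icc.2 hxlu.le) hu) (hsubII u v hu hv)
  have hmono : ∀ u ∈ Set.Icc xl xu, ∀ v ∈ Set.Icc xl xu, u ≤ v → g u ≤ g v := by
    intro u hu v hv huv
    have h := hgadd u v hu hv
    have hnn : 0 ≤ ∫ x in u..v, F x := by
      rw [intervalIntegral.integral_of_le huv]
      exact hsetnn _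
    linarith
  have hgxl : g xl = 0 := intervalIntegral.integral_same
  have hgxu : s + t ≤ g xu := hst
  have hxlm : xl ∈ Set.Icc xl xu := Set.left_mem_Icc.2 hxlu.le
  have hxum : xu ∈ Set.Icc xl xu := Set.right_mem_Icc.2 hxlu.le
  have hcont : ContinuousOn g (Set.Icc xl xu) := by
    rw [← huIcc]
    exact intervalIntegral.continuousOn_primitive_interval (huIcc ▸ hIntIcc)
  -- values below xl
  have hlow : ∀ u : ℝ, u ≤ xl → g u ≤ 0 := by
    intro u hu
    have : g u = -∫ x in u..xl, F x := by
      rw [hgdef]; exact intervalIntegral.integral_symm u xl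
    rw [this, neg_nonpos]
    rw [intervalIntegral.integral_of_le hu]
    exact hsetnn _
  -- values above xu
  have hhigh : ∀ x : ℝ, xu ≤ x → ¬ (s < g x ∧ g x < s + t) := by
    intro x hx hcontra
    by_cases hI : IntegrableOn F (Set.Ioc xl x)
    · have h1 : IntervalIntegrable F volume xl xu :=
        hsubII xl xu hxlm hxum
      have h2 : IntervalIntegrable F volume xu x := by
        rw [intervalIntegrable_iff_integrableOn_Ioc_of_le hx]
        exact hI.mono_set (Set.Ioc_subset_Ioc_left hxlu.le)
      have hadd : g xu + ∫ y in xu..x, F y = g x :=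
        intervalIntegral.integral_add_adjacent_intervals h1 h2
      have hnn : 0 ≤ ∫ y in xu..x, F y := by
        rw [intervalIntegral.integral_of_le hx]; exact hsetnn _
      linarith [hcontra.2]
    · have : g x = 0 := by
        rw [hgdef]
        simp only
        rw [intervalIntegral.integral_of_le (le_trans hxlu.le hx)]
        exact integral_undef hI
      linarith [hcontra.1]
  -- the point a with g a = s
  have hivt := intermediate_value_Icc hxlu.le hcont
  obtain ⟨c, hc, hgc⟩ : ∃ c ∈ Set.Icc xl xu, g c = s := by
    have : s ∈ Set.Icc (g xl) (g xu) := by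
      rw [hgxl]; exact ⟨hs, by linarith⟩
    obtain ⟨c, hc, hgc⟩ := hivt this
    exact ⟨c, hc, hgc⟩
  obtain ⟨c', hc', hgc'⟩ : ∃ c ∈ Set.Icc xl xu, g c = s + t := by
    have : s + t ∈ Set.Icc (g xl) (g xu) := by
      rw [hgxl]; exact ⟨by linarith, hgxu⟩
    obtain ⟨c, hc, hgc⟩ := hivt this
    exact ⟨c, hc, hgc⟩
  set S1 : Set ℝ := Set.Icc xl xu ∩ g ⁻¹' Set.Iic s with hS1
  set S2 : Set ℝ := Set.Icc xl xu ∩ g ⁻¹' Set.Ici (s + t) with hS2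
  have hS1closed : IsClosed S1 :=
    hcont.preimage_isClosed_of_isClosed isClosed_Icc isClosed_Iic
  have hS2closed : IsClosed S2 :=
    hcont.preimage_isClosed_of_isClosed isClosed_Icc isClosed_Ici
  have hS1ne : S1.Nonempty := ⟨xl, hxlm, by simp [hgxl, hs]⟩
  have hS2ne : S2.Nonempty := ⟨xu, hxum, hgxu⟩
  have hS1bdd : BddAbove S1 := (bddAbove_Icc).mono Set.inter_subset_left
  have hS2bdd : BddBelow S2 := (bddBelow_Icc).mono Set.inter_subset_left
  set a : ℝ := sSup S1 with ha
  set b : ℝ := sInf S2 with hb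
  have haS1 : a ∈ S1 := hS1closed.csSup_mem hS1ne hS1bdd
  have hbS2 : b ∈ S2 := hS2closed.csInf_mem hS2ne hS2bdd
  have haIcc : a ∈ Set.Icc xl xu := haS1.1
  have hbIcc : b ∈ Set.Icc xl xu := hbS2.1
  have hga : g a = s := by
    have h1 : g a ≤ s := haS1.2
    have h2 : s ≤ g a := by
      have : c ≤ a := le_csSup hS1bdd ⟨hc, le_of_eq hgc⟩
      calc s = g c := hgc.symm
        _ ≤ g a := hmono c hc a haIcc this
    linarith
  have hgb : g b = s + t := by
    have h1 : s + t ≤ g b := hbS2.2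
    have h2 : g b ≤ s + t := by
      have : b ≤ c' := csInf_le hS2bdd ⟨hc', le_of_eq hgc'.symm⟩
      calc g b ≤ g c' := hmono b hbIcc c' hc' this
        _ = s + t := hgc'
    linarith
  have hab : a < b := by
    by_contra h
    push_neg at h
    have := hmono b hbIcc a haIcc h
    rw [hga, hgb] at this
    linarith
  -- characterization of the preimage set
  have hsetEq : ∀ x : ℝ, g x ∈ Set.Ioo s (s + t) ↔ x ∈ Set.Ioo a b := by
    intro x
    constructor
    · rintro ⟨h1, h2⟩
      have hxIcc : x ∈ Set.Icc xl xu := by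
        constructor
        · by_contra hxl
          push_neg at hxl
          have := hlow x hxl.le
          linarith
        · by_contra hxu
          push_neg at hxu
          exact hhigh x hxu.le ⟨h1, h2⟩
      constructor
      · by_contra hax
        push_neg at hax
        have := hmono x hxIcc a haIcc hax
        rw [hga] at this
        linarith
      · by_contra hbx
        push_neg at hbx
        have := hmono b hbIcc x hxIcc hbx
        rw [hgb] at this
        linarith
    · rintro ⟨h1, h2⟩
      have hxIcc : x ∈ Set.Icc xl xu := ⟨le_trans haIcc.1 h1.le, le_trans h2.le hbIcc.2⟩
      constructor
      · by_contra hgs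
        push_neg at hgs
        have : x ∈ S1 := ⟨hxIcc, hgs⟩
        have := le_csSup hS1bdd this
        linarith
      · by_contra hgs
        push_neg at hgs
        have : x ∈ S2 := ⟨hxIcc, hgs⟩
        have := csInf_le hS2bdd this
        linarith
  -- rewrite the integral
  have hmain : ∫ ω, (Yt ω) ^ 2 *
      Set.indicator (Set.Ioo s (s + t)) (fun _ => (1 : ℝ)) (g (X ω)) ∂μ
      = ∫ x in Set.Ioo a b, F x := by
    rw [← hcond (Set.Ioo a b) measurableSet_Ioo]
    refine integral_congr_ae (Filter.Eventually.of_forall fun ω => ?_)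
    show (Yt ω) ^ 2 * Set.indicator (Set.Ioo s (s + t)) (fun _ => (1 : ℝ)) (g (X ω))
      = (Yt ω) ^ 2 * Set.indicator (Set.Ioo a b) (fun _ => (1 : ℝ)) (X ω)
    congr 1
    by_cases h : X ω ∈ Set.Ioo a b
    · rw [Set.indicator_of_mem ((hsetEq (X ω)).2 h), Set.indicator_of_mem h]
    · rw [Set.indicator_of_notMem (fun hh => h ((hsetEq (X ω)).1 hh)),
        Set.indicator_of_notMem h]
  calc ∫ ω, (Yt ω) ^ 2 *
      Set.indicator (Set.Ioo s (s + t)) (fun _ => (1 : ℝ))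
        (∫ x in xl..(X ω), σY2 x * fX x) ∂μ
      = ∫ x in Set.Ioo a b, F x := hmain
    _ = ∫ x in Set.Ioc a b, F x := (integral_Ioc_eq_integral_Ioo).symm
    _ = ∫ x in a..b, F x := (intervalIntegral.integral_of_le hab.le).symm
    _ = g b - g a := by
        have := hgadd a b haIcc hbIcc
        linarith
    _ = t := by rw [hga, hgb]; ring
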